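/- Let X be a real random variable such that G_X(0, β) < ∞ for all β in some open interval containing 1, and let n ∈ ℕ₀. Then the function β ↦ G_X(0, β) is n times differentiable at β = 1 and 𝒞ℛℰ_n(X) = ((−1)^n / n!) · (∂^n/∂β^n) G_X(0, β)|_{β=1}. -/

import Mathlib

open MeasureTheory ProbabilityTheory Set

/-- The (essential) support interval of a CDF `F`: the set where `0 < F x < 1`,
which coincides (up to endpoints) with the interval `(l, r)` where
`l = inf {x : F x > 0}` and `r = sup {x : 1 - F x > 0}`. -/
def cigfSupport (F : ℝ → ℝ) : Set ℝ := {x | 0 < F x ∧ F x < 1}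

/-- The cumulative information generating function
`G_X(α, β) = ∫_l^r F(x)^α (1 - F(x))^β dx`. -/
noncomputable def cigf (F : ℝ → ℝ) (α β : ℝ) : ℝ :=
  ∫ x in cigfSupport F, F x ^ α * (1 - F x) ^ β

/-- `(α, β) ∈ D_X`, i.e. `G_X(α, β) < ∞`. -/
def memD (F : ℝ → ℝ) (α β : ℝ) : Prop :=
  IntegrableOn (fun x => F x ^ α * (1 - F x) ^ β) (cigfSupport F)

/-- The CDF of a random variable `X` under the probability measure `P`. -/
noncomputable def rvCDF {Ω : Type*} [MeasurableSpace Ω] (P : Measure Ω) (X : Ω → ℝ) (x : ℝ) : ℝ :=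
  (P {ω | X ω ≤ x}).toReal

/-- The CDF of a probability measure on `ℝ`. -/
noncomputable def cdfOf (μ : Measure ℝ) (x : ℝ) : ℝ := (μ (Iic x)).toReal

namespace Stmt6Aux

open Real Metric

lemma measurable_rpow_const (c : ℝ) : Measurable fun x : ℝ => x ^ c := by
  have h : (fun x : ℝ => x ^ c) = fun x =>
      if x = 0 then (if c = 0 then 1 else 0)
      else Real.exp (Real.log x * c) * (if x < 0 then Real.cos (c * Real.pi) else 1) := by
    funext x
    rcases lt_trichotomy x 0 with h | h | h
    · rw [Real.rpow_def_of_neg h]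
      simp [h.ne, h]
    · subst h
      by_cases hc : c = 0 <;> simp [hc, Real.zero_rpow]
    · rw [Real.rpow_def_of_pos h]
      simp [h.ne', not_lt.mpr h.le]
  rw [h]
  refine Measurable.ite ?_ measurable_const ?_
  · exact measurableSet_eq
  · exact ((Real.measurable_log.mul_const c).exp).mul
      (Measurable.ite (measurableSet_lt measurable_id measurable_const)
        measurable_const measurable_const)

lemma bnd_aux {t : ℝ} (ht : t ∈ Set.Ioo (0:ℝ) 1) {δ : ℝ} (hδ : 0 < δ) (k : ℕ) :
    |Real.log t| ^ k * t ^ (δ * k) ≤ δ⁻¹ ^ k := by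
  have ht0 := ht.1
  have h1 : |Real.log t| ≤ t ^ (-δ) * δ⁻¹ := by
    rw [abs_of_nonpos (Real.log_nonpos ht.1.le ht.2.le), ← Real.log_inv]
    calc Real.log t⁻¹ ≤ t⁻¹ ^ δ / δ := Real.log_le_rpow_div (by positivity) hδ
      _ = t ^ (-δ) * δ⁻¹ := by
          rw [Real.inv_rpow ht0.le, ← Real.rpow_neg ht0.le, div_eq_mul_inv]
  calc |Real.log t| ^ k * t ^ (δ * k)
      ≤ (t ^ (-δ) * δ⁻¹) ^ k * t ^ (δ * k) := by
        have := pow_le_pow_left₀ (abs_nonneg _) h1 k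
        exact mul_le_mul_of_nonneg_right this (Real.rpow_nonneg ht0.le _)
    _ = δ⁻¹ ^ k * (t ^ (-(δ * k)) * t ^ (δ * k)) := by
        rw [mul_pow, ← Real.rpow_natCast (t ^ (-δ)) k, ← Real.rpow_mul ht0.le]
        ring_nf
    _ = δ⁻¹ ^ k := by
        rw [← Real.rpow_add ht0]
        simp

lemma bound_main {t : ℝ} (ht : t ∈ Set.Ioo (0:ℝ) 1) {c' c β : ℝ} (h1 : c' < c) (h2 : c ≤ β)
    (k : ℕ) : t ^ β * |Real.log t| ^ k ≤ ((c - c') / (k + 1))⁻¹ ^ k * t ^ c' := by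
  have ht0 := ht.1
  set δ := (c - c') / (k + 1 : ℝ) with hδdef
  have hk1 : (0:ℝ) < (k : ℝ) + 1 := by positivity
  have hδ : 0 < δ := by
    apply div_pos (by linarith) hk1
  have hc : c = c' + δ + δ * k := by
    have h' : δ * (k + 1) = c - c' := by rw [hδdef]; exact div_mul_cancel₀ _ hk1.ne'
    linear_combination -h'
  calc t ^ β * |Real.log t| ^ k ≤ t ^ c * |Real.log t| ^ k := by
        exact mul_le_mul_of_nonneg_right
          (Real.rpow_le_rpow_of_exponent_ge ht0 ht.2.le h2) (by positivity)
    _ = (t ^ c' * t ^ δ) * (|Real.log t| ^ k * t ^ (δ * k)) := by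
        rw [hc, Real.rpow_add ht0, Real.rpow_add ht0]
        ring
    _ ≤ (t ^ c' * 1) * δ⁻¹ ^ k := by
        apply mul_le_mul
        · exact mul_le_mul_of_nonneg_left (Real.rpow_le_one ht0.le ht.2.le hδ.le)
            (Real.rpow_nonneg ht0.le _)
        · exact bnd_aux ht hδ k
        · positivity
        · positivity
    _ = ((c - c') / (k + 1))⁻¹ ^ k * t ^ c' := by rw [hδdef]; ring

variable {u : ℝ → ℝ} {S : Set ℝ} {a b : ℝ}

lemma meas_aux (hu : Measurable u) (β : ℝ) (k : ℕ) (μ : Measure ℝ) :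
    AEStronglyMeasurable (fun x => u x ^ β * Real.log (u x) ^ k) μ :=
  (((measurable_rpow_const β).comp hu).mul
    ((Real.measurable_log.comp hu).pow_const k)).aestronglyMeasurable

lemma norm_eq_aux {t : ℝ} (ht : 0 ≤ t) (β : ℝ) (k : ℕ) :
    ‖t ^ β * Real.log t ^ k‖ = t ^ β * |Real.log t| ^ k := by
  rw [norm_mul, Real.norm_eq_abs, Real.norm_eq_abs, abs_of_nonneg (Real.rpow_nonneg ht β),
    abs_pow]

lemma integ_aux (hu : Measurable u) (hS : MeasurableSet S)
    (huS : ∀ x ∈ S, u x ∈ Set.Ioo (0:ℝ) 1)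
    (hint : ∀ β ∈ Set.Ioo a b, IntegrableOn (fun x => u x ^ β) S)
    (k : ℕ) {β : ℝ} (hβ : β ∈ Set.Ioo a b) :
    IntegrableOn (fun x => u x ^ β * Real.log (u x) ^ k) S := by
  set c' := (a + β) / 2 with hc'def
  have hc'1 : a < c' := by simp only [hc'def]; linarith [hβ.1]
  have hc'2 : c' < β := by simp only [hc'def]; linarith [hβ.1]
  set C := ((β - c') / (k + 1) : ℝ)⁻¹ ^ k with hCdef
  have hC : 0 ≤ C := by
    have h0 : (0:ℝ) < (β - c') / (k + 1) := div_pos (by linarith) (by positivity)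
    exact pow_nonneg (inv_nonneg.mpr h0.le) k
  refine Integrable.mono (((hint c' ⟨hc'1, hc'2.trans hβ.2⟩).const_mul C)) (meas_aux hu β k _) ?_
  filter_upwards [ae_restrict_mem hS] with x hx
  rw [norm_eq_aux (huS x hx).1.le]
  calc u x ^ β * |Real.log (u x)| ^ k ≤ C * u x ^ c' :=
        bound_main (huS x hx) hc'2 le_rfl k
    _ ≤ ‖C * u x ^ c'‖ := le_abs_self _

lemma hasDeriv_aux (hu : Measurable u) (hS : MeasurableSet S)
    (huS : ∀ x ∈ S, u x ∈ Set.Ioo (0:ℝ) 1)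
    (hint : ∀ β ∈ Set.Ioo a b, IntegrableOn (fun x => u x ^ β) S)
    (k : ℕ) {β₀ : ℝ} (hβ₀ : β₀ ∈ Set.Ioo a b) :
    HasDerivAt (fun β => ∫ x in S, u x ^ β * Real.log (u x) ^ k)
      (∫ x in S, u x ^ β₀ * Real.log (u x) ^ (k + 1)) β₀ := by
  set c' := (a + β₀) / 2 with hc'def
  have hc'1 : a < c' := by simp only [hc'def]; linarith [hβ₀.1]
  have hc'2 : c' < β₀ := by simp only [hc'def]; linarith [hβ₀.1]
  set ε := (β₀ - c') / 2 with hεdef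
  have hε : 0 < ε := by simp only [hεdef]; linarith
  have hcc : c' < β₀ - ε := by simp only [hεdef]; linarith
  set C := ((β₀ - ε - c') / (k + 1 + 1) : ℝ)⁻¹ ^ (k + 1) with hCdef
  refine (hasDerivAt_integral_of_dominated_loc_of_deriv_le
    (F := fun β x => u x ^ β * Real.log (u x) ^ k)
    (F' := fun β x => u x ^ β * Real.log (u x) ^ (k + 1)) (Metric.ball_mem_nhds β₀ hε)
    (Filter.Eventually.of_forall fun β => meas_aux hu β k _)
    (integ_aux hu hS huS hint k hβ₀)
    (meas_aux hu β₀ (k + 1) _)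
    (bound := fun x => C * u x ^ c') ?_
    ((hint c' ⟨hc'1, hc'2.trans hβ₀.2⟩).const_mul C) ?_).2
  · filter_upwards [ae_restrict_mem hS] with x hx β hβ
    rw [norm_eq_aux (huS x hx).1.le]
    have hβlb : β₀ - ε ≤ β := by
      rw [Metric.mem_ball, Real.dist_eq, abs_lt] at hβ
      linarith [hβ.1]
    have := bound_main (huS x hx) hcc hβlb (k + 1)
    calc u x ^ β * |Real.log (u x)| ^ (k + 1)
        ≤ ((β₀ - ε - c') / (↑(k + 1) + 1))⁻¹ ^ (k + 1) * u x ^ c' := this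
      _ = C * u x ^ c' := by rw [hCdef]; push_cast; ring_nf
  · filter_upwards [ae_restrict_mem hS] with x hx β _
    have h := ((Real.hasStrictDerivAt_const_rpow (huS x hx).1 β).hasDerivAt).mul_const
      (Real.log (u x) ^ k)
    refine h.congr_deriv ?_
    ring

end Stmt6Aux

open Stmt6Aux in
/-- If `G_X(0, β) < ∞` for all `β` in an open interval containing `1`, then
`β ↦ G_X(0, β)` is `n` times differentiable at `β = 1` and
`𝒞ℛℰ_n(X) = ((-1)^n / n!) ∂^n/∂β^n G_X(0, β) |_{β=1}`. -/
theorem stmt6 {Ω : Type*} [MeasurableSpace Ω] (P : Measure Ω) [IsProbabilityMeasure P]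
    (X : Ω → ℝ) (hX : Measurable X) (n : ℕ)
    (a b : ℝ) (ha : a < 1) (hb : 1 < b)
    (hfin : ∀ β ∈ Ioo a b, memD (rvCDF P X) 0 β) :
    ContDiffAt ℝ n (fun β => cigf (rvCDF P X) 0 β) 1 ∧
    (n.factorial : ℝ)⁻¹ *
        ∫ x in cigfSupport (rvCDF P X),
          (1 - rvCDF P X x) * (-Real.log (1 - rvCDF P X x)) ^ n =
      ((-1 : ℝ) ^ n / (n.factorial : ℝ)) *
        iteratedDeriv n (fun β => cigf (rvCDF P X) 0 β) 1 := by
  set F := rvCDF P X with hF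
  have hFmono : Monotone F := fun x y hxy =>
    ENNReal.toReal_mono (measure_ne_top P _) (measure_mono fun ω hω => le_trans hω hxy)
  have hFmeas : Measurable F := hFmono.measurable
  set S := cigfSupport F with hSdef
  have hS : MeasurableSet S :=
    (measurableSet_lt measurable_const hFmeas).inter (measurableSet_lt hFmeas measurable_const)
  have hu : Measurable fun x => 1 - F x := measurable_const.sub hFmeas
  have huS : ∀ x ∈ S, 1 - F x ∈ Set.Ioo (0:ℝ) 1 := fun x hx =>
    ⟨by simp only [sub_pos]; exact hx.2, by linarith [hx.1]⟩
  have hint : ∀ β ∈ Set.Ioo a b, IntegrableOn (fun x => (1 - F x) ^ β) S := by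
    intro β hβ
    simpa [memD, Real.rpow_zero] using hfin β hβ
  set G : ℕ → ℝ → ℝ := fun k β => ∫ x in S, (1 - F x) ^ β * Real.log (1 - F x) ^ k with hGdef
  have hg : (fun β => cigf F 0 β) = G 0 := by
    funext β
    simp [cigf, hGdef, Real.rpow_zero, ← hSdef]
  have hasderiv : ∀ k, ∀ β ∈ Set.Ioo a b, HasDerivAt (G k) (G (k + 1) β) β :=
    fun k β hβ => hasDeriv_aux hu hS huS hint k hβ
  have h1ab : (1:ℝ) ∈ Set.Ioo a b := ⟨ha, hb⟩
  have hiter : ∀ k, Set.EqOn (iteratedDeriv k (G 0)) (G k) (Set.Ioo a b) := by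
    intro k
    induction k with
    | zero => rw [iteratedDeriv_zero]; exact fun _ _ => rfl
    | succ k ih =>
      intro β hβ
      rw [iteratedDeriv_succ]
      have heq : iteratedDeriv k (G 0) =ᶠ[nhds β] G k :=
        Filter.eventuallyEq_of_mem (Ioo_mem_nhds hβ.1 hβ.2) ih
      rw [heq.deriv_eq]
      exact (hasderiv k β hβ).deriv
  have hcd : ∀ m : ℕ, ∀ k : ℕ, ContDiffOn ℝ m (G k) (Set.Ioo a b) := by
    intro m
    induction m with
    | zero =>
      intro k
      simp only [Nat.cast_zero, contDiffOn_zero]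
      exact fun β hβ => ((hasderiv k β hβ).differentiableAt.continuousAt).continuousWithinAt
    | succ m ih =>
      intro k
      have hcast : ((m + 1 : ℕ) : WithTop ℕ∞) = (m : WithTop ℕ∞) + 1 := by push_cast; rfl
      rw [hcast, contDiffOn_succ_iff_deriv_of_isOpen isOpen_Ioo]
      refine ⟨fun β hβ => (hasderiv k β hβ).differentiableAt.differentiableWithinAt,
        ?_, ?_⟩
      · intro h; simp at h
      · exact (ih (k + 1)).congr fun β hβ => (hasderiv k β hβ).deriv
  constructor
  · rw [hg]
    exact (hcd n 0).contDiffAt (Ioo_mem_nhds ha hb)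
  · rw [hg, hiter n h1ab]
    have hInt : (fun x => (1 - F x) * (-Real.log (1 - F x)) ^ n)
        = fun x => (-1:ℝ) ^ n * ((1 - F x) ^ (1:ℝ) * Real.log (1 - F x) ^ n) := by
      funext x
      rw [Real.rpow_one, neg_pow]
      ring
    rw [hInt, integral_const_mul]
    show (n.factorial : ℝ)⁻¹ * ((-1:ℝ) ^ n * G n 1) = (-1:ℝ) ^ n / n.factorial * G n 1
    ring
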